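/- Let n be a 3-step nilpotent Lie algebra with inner product, C(n) its commutator ideal, v = C(n)^⊥, and S : n → n a symmetric linear map. Then ⟨Y, [SY, Y]⟩ = 0 for all Y ∈ n if and only if: (i) [SX, Y] = [X, SY] for all X,Y ∈ v; (ii) for each X ∈ v, the map U ↦ [X, SU] - [SX, U] is skew-symmetric on C(n), i.e. ⟨[X,SU₁] - [SX,U₁], U₂⟩ + ⟨[X,SU₂] - [SX,U₂], U₁⟩ = 0 for all U₁,U₂ ∈ C(n); and (iii) ⟨U, [SU, U]⟩ = 0 for all U ∈ C(n). -/

import Mathlib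

/-- The commutator ideal of a Lie algebra, as the span of all brackets. -/
def commIdeal (n : Type*) [LieRing n] [LieAlgebra ℝ n] : Submodule ℝ n :=
  Submodule.span ℝ {z : n | ∃ a b : n, ⁅a, b⁆ = z}

/-- Membership in `v = C(n)ᗮ`, the orthogonal complement of the commutator
ideal with respect to the inner product `ip`. -/
def InCommPerp {n : Type*} [LieRing n] [LieAlgebra ℝ n]
    (ip : n →ₗ[ℝ] n →ₗ[ℝ] ℝ) (X : n) : Prop :=
  ∀ U ∈ commIdeal n, ip X U = 0

lemma bracket_mem_commIdeal {n : Type*} [LieRing n] [LieAlgebra ℝ n] (a b : n) :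
    ⁅a, b⁆ ∈ commIdeal n :=
  Submodule.subset_span ⟨a, b, rfl⟩

/-- In a 3-step nilpotent metric Lie algebra with `n = v ⊕ C(n)`,
a symmetric map `S` satisfies `⟨Y,[SY,Y]⟩ = 0` for all `Y` iff
(i) `[SX,Y] = [X,SY]` on `v`, (ii) `U ↦ [X,SU] - [SX,U]` is skew-symmetric on
`C(n)` for every `X ∈ v`, and (iii) `⟨U,[SU,U]⟩ = 0` for all `U ∈ C(n)`. -/
theorem three_step_quadratic_first_integral_iff
    {n : Type*} [LieRing n] [LieAlgebra ℝ n] [FiniteDimensional ℝ n]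
    (h3 : ∀ X U V W : n, ⁅X, ⁅U, ⁅V, W⁆⁆⁆ = 0)
    (ip : n →ₗ[ℝ] n →ₗ[ℝ] ℝ)
    (ip_symm : ∀ x y : n, ip x y = ip y x)
    (ip_pos : ∀ x : n, x ≠ 0 → 0 < ip x x)
    (S : n →ₗ[ℝ] n)
    (hSsym : ∀ x y : n, ip (S x) y = ip x (S y)) :
    (∀ Y : n, ip Y ⁅S Y, Y⁆ = 0) ↔
      ((∀ X Y : n, InCommPerp ip X → InCommPerp ip Y →
          ⁅S X, Y⁆ = ⁅X, S Y⁆) ∧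
       (∀ X : n, InCommPerp ip X →
          ∀ U₁ U₂ : n, U₁ ∈ commIdeal n → U₂ ∈ commIdeal n →
            ip (⁅X, S U₁⁆ - ⁅S X, U₁⁆) U₂ + ip (⁅X, S U₂⁆ - ⁅S X, U₂⁆) U₁ = 0) ∧
       (∀ U ∈ commIdeal n, ip U ⁅S U, U⁆ = 0)) := by
  classical
  -- positive definiteness: zero self-pairing means zero
  have hzero : ∀ x : n, ip x x = 0 → x = 0 := by
    intro x hx
    by_contra h
    exact (ip_pos x h).ne' hx
  -- ip X (bracket) = 0 for X in the perp
  have hXbr : ∀ X : n, InCommPerp ip X → ∀ a b : n, ip X ⁅a, b⁆ = 0 := by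
    intro X hX a b
    exact hX _ (bracket_mem_commIdeal a b)
  constructor
  · -- forward direction
    intro hf
    -- key homogeneous components, for X ∈ v, U ∈ C(n)
    have key : ∀ X : n, InCommPerp ip X → ∀ U ∈ commIdeal n,
        ip U ⁅S X, X⁆ = 0 ∧ ip U ⁅S X, U⁆ + ip U ⁅S U, X⁆ = 0 := by
      intro X hX U hU
      have hX' := hXbr X hX
      have hc : ip U ⁅S U, U⁆ = 0 := hf U
      have e1 := hf (X + U)
      have e2 := hf (X - U)
      simp only [map_add, map_sub, lie_add, add_lie, lie_sub, sub_lie,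
        LinearMap.add_apply, LinearMap.sub_apply, hX'] at e1 e2
      constructor <;> linarith
    have keyA : ∀ X : n, InCommPerp ip X → ⁅S X, X⁆ = 0 := by
      intro X hX
      have := (key X hX _ (bracket_mem_commIdeal (S X) X)).1
      exact hzero _ this
    refine ⟨?_, ?_, fun U _ => hf U⟩
    · intro X Y hX hY
      have hXY : InCommPerp ip (X + Y) := by
        intro U hU
        simp [map_add, LinearMap.add_apply, hX U hU, hY U hU]
      have hall : ⁅S X + S Y, X + Y⁆ = 0 := by
        have := keyA (X + Y) hXY
        rwa [map_add] at this
      have hsum : ⁅S X, Y⁆ + ⁅S Y, X⁆ = 0 := by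
        have expand : ⁅S X + S Y, X + Y⁆ = ⁅S X, Y⁆ + ⁅S Y, X⁆ := by
          rw [add_lie, lie_add, lie_add, keyA X hX, keyA Y hY]
          abel
        rw [← expand]; exact hall
      have : ⁅S X, Y⁆ = -⁅S Y, X⁆ := add_eq_zero_iff_eq_neg.1 hsum
      rw [this]
      exact lie_skew X (S Y)
    · intro X hX U₁ U₂ hU₁ hU₂
      have hB1 := (key X hX U₁ hU₁).2
      have hB2 := (key X hX U₂ hU₂).2
      have hB12 := (key X hX (U₁ + U₂) (Submodule.add_mem _ hU₁ hU₂)).2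
      simp only [map_add, lie_add, add_lie, LinearMap.add_apply] at hB12
      -- rewrite the goal's terms in the `ip U ⁅…⁆` form
      have g1 : ip (⁅X, S U₁⁆ - ⁅S X, U₁⁆) U₂
          = -(ip U₂ ⁅S U₁, X⁆) - ip U₂ ⁅S X, U₁⁆ := by
        rw [ip_symm, map_sub, ← lie_skew X (S U₁), map_neg]
      have g2 : ip (⁅X, S U₂⁆ - ⁅S X, U₂⁆) U₁
          = -(ip U₁ ⁅S U₂, X⁆) - ip U₁ ⁅S X, U₂⁆ := by
        rw [ip_symm, map_sub, ← lie_skew X (S U₂), map_neg]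
      rw [g1, g2]
      linarith
  · -- reverse direction
    rintro ⟨h1, h2, h3c⟩ Y
    -- orthogonal decomposition Y = U + X
    have hrefl : LinearMap.IsRefl ip := by
      intro x y h
      rw [ip_symm]; exact h
    have hnd : (LinearMap.BilinForm.restrict ip (commIdeal n)).Nondegenerate := by
      refine ⟨?_, ?_⟩ <;>
      · intro x hx
        have : ip x.1 x.1 = 0 := hx x
        exact Subtype.ext (hzero _ this)
    have hcompl : IsCompl (commIdeal n) (LinearMap.BilinForm.orthogonal ip (commIdeal n)) :=
      LinearMap.BilinForm.isCompl_orthogonal_of_restrict_nondegenerate hrefl hnd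
    have hmem : Y ∈ commIdeal n ⊔ LinearMap.BilinForm.orthogonal ip (commIdeal n) := by
      rw [hcompl.sup_eq_top]; trivial
    obtain ⟨U, hU, X, hXmem, hY⟩ := Submodule.mem_sup.1 hmem
    have hX : InCommPerp ip X := by
      intro W hW
      rw [ip_symm]
      exact hXmem W hW
    have hX' := hXbr X hX
    -- [S X, X] = 0
    have hbr0 : ⁅S X, X⁆ = 0 := by
      have e := h1 X X hX hX
      rw [← lie_skew X (S X)] at e
      have h2s : (2 : ℝ) • ⁅S X, X⁆ = 0 := by
        rw [two_smul]
        exact add_eq_zero_iff_eq_neg.2 e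
      exact (smul_eq_zero.1 h2s).resolve_left (by norm_num)
    -- mixed quadratic term vanishes
    have hB : ip U ⁅S X, U⁆ + ip U ⁅S U, X⁆ = 0 := by
      have := h2 X hX U U hU hU
      have hrw : ip (⁅X, S U⁆ - ⁅S X, U⁆) U
          = -(ip U ⁅S U, X⁆) - ip U ⁅S X, U⁆ := by
        rw [ip_symm, map_sub, ← lie_skew X (S U), map_neg]
      rw [hrw] at this
      linarith
    have hc : ip U ⁅S U, U⁆ = 0 := h3c U hU
    subst hY
    simp only [map_add, lie_add, add_lie, LinearMap.add_apply, hbr0, hX',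
      map_zero, zero_add, add_zero]
    linarith
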